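/- Let q = 2^ℓ, fix s, t dividing q−1, and fix residues i ∈ [s], j ∈ [t]. The number of pairs (a, b) with 0 ≤ a, b ≤ q−1 such that a ≡ i (mod s), a + b ≡ j (mod t), and the complement of the binary-digit set of a is contained in the binary-digit set of b, equals |E_{i,j}| where E_{i,j} = {(m, n) ∈ [q]² : m ≡ i (mod s), n ≡ j (mod t), n ≤₂ m}. -/

import Mathlib

open scoped Classical

private lemma land_div_two' (x y : ℕ) : (x &&& y) / 2 = x / 2 &&& y / 2 :=
  Nat.eq_of_testBit_eq fun k => by
    simp [Nat.testBit_div_two, Nat.testBit_and]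

private lemma lor_div_two' (x y : ℕ) : (x ||| y) / 2 = x / 2 ||| y / 2 :=
  Nat.eq_of_testBit_eq fun k => by
    simp [Nat.testBit_div_two, Nat.testBit_or]

private lemma add_of_land_eq_zero : ∀ x y : ℕ, x &&& y = 0 → x + y = x ||| y := by
  intro x
  induction x using Nat.strong_induction_on with
  | _ x ih =>
    intro y h
    rcases Nat.eq_zero_or_pos x with hx | hx
    · simp [hx]
    · have h2 : x / 2 &&& y / 2 = 0 := by
        rw [← land_div_two', h]
      have ih' : x / 2 + y / 2 = x / 2 ||| y / 2 :=
        ih (x / 2) (Nat.div_lt_self hx (by norm_num)) (y / 2) h2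
      have hbit : (x &&& y).testBit 0 = false := by simp [h]
      rw [Nat.testBit_and] at hbit
      have hnotboth : ¬ (x % 2 = 1 ∧ y % 2 = 1) := by
        simp only [Nat.testBit_zero] at hbit
        intro ⟨u, v⟩; simp [u, v] at hbit
      have hor : (x ||| y).testBit 0 = (x.testBit 0 || y.testBit 0) := Nat.testBit_or x y 0
      simp only [Nat.testBit_zero] at hor
      have hdiv : (x ||| y) / 2 = x / 2 ||| y / 2 := lor_div_two' x y
      have e1 := Nat.div_add_mod x 2
      have e2 := Nat.div_add_mod y 2
      have e3 := Nat.div_add_mod (x ||| y) 2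
      rw [hdiv, ← ih'] at e3
      have hx2 := Nat.mod_two_eq_zero_or_one x
      have hy2 := Nat.mod_two_eq_zero_or_one y
      have ho2 := Nat.mod_two_eq_zero_or_one (x ||| y)
      generalize ho : x ||| y = o at e3 hor ⊢
      rcases hx2 with hx2 | hx2 <;> rcases hy2 with hy2 | hy2 <;>
        simp [hx2, hy2] at hor <;> omega

private lemma testBit_ge {x n k : ℕ} (hx : x < 2 ^ n) (hk : n ≤ k) :
    x.testBit k = false :=
  Nat.testBit_lt_two_pow (lt_of_lt_of_le hx (Nat.pow_le_pow_right (by norm_num) hk))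

/-- The number of pairs `(a, b) ∈ [q]²` with `a ≡ i (mod s)`,
`a + b ≡ j (mod t)`, and the complement (within `ℓ` bits) of the binary-digit
set of `a` contained in the binary-digit set of `b`, equals `|E_{i,j}|`, where
`E_{i,j}` is the set of pairs `(m, n) ∈ [q]²` with `m ≡ i (mod s)`,
`n ≡ j (mod t)` and `n ≤₂ m`. -/
theorem count_not_good_in_class (ℓ q s t i j : ℕ) (hq : q = 2 ^ ℓ)
    (hs : s ∣ q - 1) (ht : t ∣ q - 1) (hi : i < s) (hj : j < t) :
    ((Finset.range q ×ˢ Finset.range q).filter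
        (fun p => p.1 % s = i ∧ (p.1 + p.2) % t = j ∧
          ∀ k < ℓ, p.1.testBit k = false → p.2.testBit k = true)).card
      = ((Finset.range q ×ˢ Finset.range q).filter
        (fun p => p.1 % s = i ∧ p.2 % t = j ∧
          ∀ k, p.2.testBit k = true → p.1.testBit k = true)).card := by
  subst hq
  set C := 2 ^ ℓ - 1 with hC
  -- basic facts about d a := C ^^^ a for a < 2^ℓ
  have hdbit : ∀ a k : ℕ, (C ^^^ a).testBit k = (decide (k < ℓ)).xor (a.testBit k) := by
    intro a k
    simp [hC, Nat.testBit_xor]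
  have hadisj : ∀ a : ℕ, a < 2 ^ ℓ → a &&& (C ^^^ a) = 0 := by
    intro a ha
    apply Nat.eq_of_testBit_eq
    intro k
    rw [Nat.testBit_and, hdbit, Nat.zero_testBit]
    by_cases hk : k < ℓ
    · cases h : a.testBit k <;> simp [hk, h]
    · simp [testBit_ge ha (by omega : ℓ ≤ k)]
  have haC : ∀ a : ℕ, a < 2 ^ ℓ → a + (C ^^^ a) = C := by
    intro a ha
    rw [add_of_land_eq_zero a _ (hadisj a ha)]
    apply Nat.eq_of_testBit_eq
    intro k
    rw [Nat.testBit_or, hdbit]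
    by_cases hk : k < ℓ
    · cases h : a.testBit k <;> simp [hC, hk, h]
    · simp [hC, hk, testBit_ge ha (by omega : ℓ ≤ k)]
  have hCmod : ∀ c : ℕ, (c + C) % t = c % t := by
    obtain ⟨u, hu⟩ := ht
    intro c
    rw [hu, Nat.add_mul_mod_self_left]
  apply Finset.card_nbij' (fun p => (p.1, p.1 &&& p.2)) (fun p => (p.1, p.2 + (C ^^^ p.1)))
  · -- forward map lands in target
    intro p hp
    simp only [Finset.mem_coe, Finset.mem_filter, Finset.mem_product, Finset.mem_range] at hp ⊢
    obtain ⟨⟨ha, hb⟩, his, hjs, hbits⟩ := hp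
    have hkey : p.2 = (p.1 &&& p.2) + (C ^^^ p.1) := by
      rw [add_of_land_eq_zero _ _ (by
        apply Nat.eq_of_testBit_eq
        intro k
        rw [Nat.testBit_and, Nat.testBit_and, hdbit, Nat.zero_testBit]
        by_cases hk : k < ℓ
        · cases h1 : p.1.testBit k <;> simp [hk, h1]
        · simp [testBit_ge ha (by omega : ℓ ≤ k)])]
      apply Nat.eq_of_testBit_eq
      intro k
      rw [Nat.testBit_or, Nat.testBit_and, hdbit]
      by_cases hk : k < ℓ
      · cases h1 : p.1.testBit k
        · simp [hk, h1, hbits k hk h1]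
        · simp [hk, h1]
      · have hk' : ℓ ≤ k := by omega
        simp [hk, testBit_ge ha hk', testBit_ge hb hk']
    refine ⟨⟨ha, lt_of_le_of_lt Nat.and_le_left ha⟩, his, ?_, ?_⟩
    · rw [← hCmod (p.1 &&& p.2), ← hjs]
      congr 1
      have := haC p.1 ha
      omega
    · intro k hk
      rw [Nat.testBit_and] at hk
      simp only [Bool.and_eq_true] at hk
      exact hk.1
  · -- backward map lands in source
    intro p hp
    simp only [Finset.mem_coe, Finset.mem_filter, Finset.mem_product, Finset.mem_range] at hp ⊢
    obtain ⟨⟨ha, hc⟩, his, hjt, hbits⟩ := hp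
    have hdisj : p.2 &&& (C ^^^ p.1) = 0 := by
      apply Nat.eq_of_testBit_eq
      intro k
      rw [Nat.testBit_and, hdbit, Nat.zero_testBit]
      by_cases hk : k < ℓ
      · cases h2 : p.2.testBit k
        · simp [hk, h2]
        · simp [hk, h2, hbits k h2]
      · simp [testBit_ge hc (by omega : ℓ ≤ k)]
    have hb : p.2 + (C ^^^ p.1) = p.2 ||| (C ^^^ p.1) := add_of_land_eq_zero _ _ hdisj
    have hdlt : (C ^^^ p.1) < 2 ^ ℓ := by
      have h1 : C < 2 ^ ℓ := by
        have : (0:ℕ) < 2 ^ ℓ := Nat.pow_pos (by norm_num)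
        omega
      exact Nat.xor_lt_two_pow h1 ha
    refine ⟨⟨ha, ?_⟩, his, ?_, ?_⟩
    · rw [hb]; exact Nat.or_lt_two_pow hc hdlt
    · rw [show p.1 + (p.2 + (C ^^^ p.1)) = p.2 + (p.1 + (C ^^^ p.1)) by ring,
        haC p.1 ha, hCmod]
      exact hjt
    · intro k hk hfalse
      rw [hb, Nat.testBit_or, hdbit]
      simp [hk, hfalse]
  · -- left inverse
    intro p hp
    simp only [Finset.mem_coe, Finset.mem_filter, Finset.mem_product, Finset.mem_range] at hp
    obtain ⟨⟨ha, hb⟩, his, hjs, hbits⟩ := hp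
    have hkey : p.2 = (p.1 &&& p.2) + (C ^^^ p.1) := by
      rw [add_of_land_eq_zero _ _ (by
        apply Nat.eq_of_testBit_eq
        intro k
        rw [Nat.testBit_and, Nat.testBit_and, hdbit, Nat.zero_testBit]
        by_cases hk : k < ℓ
        · cases h1 : p.1.testBit k <;> simp [hk, h1]
        · simp [testBit_ge ha (by omega : ℓ ≤ k)])]
      apply Nat.eq_of_testBit_eq
      intro k
      rw [Nat.testBit_or, Nat.testBit_and, hdbit]
      by_cases hk : k < ℓ
      · cases h1 : p.1.testBit k
        · simp [hk, h1, hbits k hk h1]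
        · simp [hk, h1]
      · have hk' : ℓ ≤ k := by omega
        simp [hk, testBit_ge ha hk', testBit_ge hb hk']
    simp only
    rw [← hkey]
  · -- right inverse
    intro p hp
    simp only [Finset.mem_coe, Finset.mem_filter, Finset.mem_product, Finset.mem_range] at hp
    obtain ⟨⟨ha, hc⟩, his, hjt, hbits⟩ := hp
    have hdisj : p.2 &&& (C ^^^ p.1) = 0 := by
      apply Nat.eq_of_testBit_eq
      intro k
      rw [Nat.testBit_and, hdbit, Nat.zero_testBit]
      by_cases hk : k < ℓ
      · cases h2 : p.2.testBit k
        · simp [hk, h2]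
        · simp [hk, h2, hbits k h2]
      · simp [testBit_ge hc (by omega : ℓ ≤ k)]
    have hb : p.2 + (C ^^^ p.1) = p.2 ||| (C ^^^ p.1) := add_of_land_eq_zero _ _ hdisj
    simp only
    congr 1
    rw [hb]
    apply Nat.eq_of_testBit_eq
    intro k
    rw [Nat.testBit_and, Nat.testBit_or, hdbit]
    by_cases hk : k < ℓ
    · cases h1 : p.1.testBit k
      · cases h2 : p.2.testBit k
        · simp [hk, h1, h2]
        · exact absurd (hbits k h2) (by simp [h1])
      · simp [hk, h1]
    · have hk' : ℓ ≤ k := by omega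
      simp [hk, testBit_ge ha hk', testBit_ge hc hk']
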